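/- Let ρ be a density matrix on ℂ^p ⊗ ℂ^q (a positive semidefinite complex (pq)×(pq) matrix with trace 1), and let {Π^A_{a|x} : a ∈ Fin A, x ∈ Fin X} and {Π^B_{b|y} : b ∈ Fin B, y ∈ Fin Y} be POVMs on ℂ^p and ℂ^q respectively (positive semidefinite matrices with Σ_a Π^A_{a|x} = 1 for each x and Σ_b Π^B_{b|y} = 1 for each y). Set d = A·B·X·Y. Then there exists a density matrix ρ' on ℂ^p ⊗ ℂ^q of rank at most d+1 such that tr[ρ' (Π^A_{a|x} ⊗ Π^B_{b|y})] = tr[ρ (Π^A_{a|x} ⊗ Π^B_{b|y})] for all a, b, x, y; i.e., the rank of the shared quantum state can be reduced to d+1 without changing the observed behavior P(ab|xy), while the dimension of the Hilbert space is unchanged. -/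

import Mathlib

open Matrix
open scoped Kronecker ComplexOrder

namespace QRRaux

variable {n : Type*} [Fintype n] [DecidableEq n]

lemma rank_add_le (A B : Matrix n n ℂ) : (A + B).rank ≤ A.rank + B.rank := by
  rw [Matrix.rank, Matrix.rank, Matrix.rank, mulVecLin_add]
  refine le_trans (Submodule.finrank_mono ?_)
    (Submodule.finrank_add_le_finrank_add_finrank _ _)
  rintro y ⟨x, rfl⟩
  exact Submodule.add_mem_sup (LinearMap.mem_range_self _ x) (LinearMap.mem_range_self _ x)

lemma rank_sum_le {ι : Type*} (s : Finset ι) (M : ι → Matrix n n ℂ) :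
    (∑ i ∈ s, M i).rank ≤ ∑ i ∈ s, (M i).rank := by
  classical
  induction s using Finset.induction with
  | empty => simp
  | @insert a s ha ih =>
    rw [Finset.sum_insert ha, Finset.sum_insert ha]
    exact (rank_add_le _ _).trans (by omega)

lemma rank_smul_le (c : ℂ) (M : Matrix n n ℂ) : (c • M).rank ≤ M.rank := by
  have h : c • M = (c • (1 : Matrix n n ℂ)) * M := by rw [Matrix.smul_mul, one_mul]
  rw [h]
  exact Matrix.rank_mul_le_right _ _

lemma rank_vecMulVec_le (u v : n → ℂ) : (vecMulVec u v).rank ≤ 1 := by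
  rw [vecMulVec_eq (Fin 1)]
  exact (Matrix.rank_mul_le_left _ _).trans
    ((Matrix.rank_le_card_width _).trans (by simp))

lemma psd_vecMulVec (u : n → ℂ) : (vecMulVec u (star u)).PosSemidef := by
  have h : vecMulVec u (star u) = replicateCol (Fin 1) u * (replicateCol (Fin 1) u)ᴴ := by
    rw [conjTranspose_replicateCol, vecMulVec_eq (Fin 1)]
    rfl
  rw [h]
  exact posSemidef_self_mul_conjTranspose _

lemma psd_smul {c : ℝ} (hc : 0 ≤ c) {M : Matrix n n ℂ} (hM : M.PosSemidef) :
    ((c : ℂ) • M).PosSemidef := by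
  constructor
  · ext i j
    simp only [conjTranspose_apply, Matrix.smul_apply, star_mul', smul_eq_mul]
    rw [Complex.star_def, Complex.conj_ofReal, ← hM.1.apply i j]
    rfl
  · intro x
    exact (hM.smul (show (0 : ℂ) ≤ (c : ℂ) by exact_mod_cast hc)).2 x

lemma psd_sum {ι : Type*} (s : Finset ι) (M : ι → Matrix n n ℂ)
    (h : ∀ i ∈ s, (M i).PosSemidef) : (∑ i ∈ s, M i).PosSemidef := by
  classical
  induction s using Finset.induction with
  | empty => simpa using Matrix.PosSemidef.zero
  | @insert a s ha ih =>
    rw [Finset.sum_insert ha]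
    exact (h a (by simp)).add (ih fun i hi => h i (by simp [hi]))

lemma trace_real {M N : Matrix n n ℂ} (hM : M.IsHermitian) (hN : N.IsHermitian) :
    ((M * N).trace.re : ℂ) = (M * N).trace := by
  have h : star ((M * N).trace) = (M * N).trace := by
    rw [← Matrix.trace_conjTranspose, conjTranspose_mul, hM.eq, hN.eq, Matrix.trace_mul_comm]
  rw [Complex.star_def] at h
  exact Complex.conj_eq_iff_re.mp h

lemma kron_herm {p q : Type*} [Fintype p] [Fintype q]
    {A : Matrix p p ℂ} {B : Matrix q q ℂ}
    (hA : A.IsHermitian) (hB : B.IsHermitian) : (A ⊗ₖ B).IsHermitian := by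
  apply Matrix.IsHermitian.ext
  rintro ⟨i1, i2⟩ ⟨j1, j2⟩
  simp only [kroneckerMap_apply, star_mul']
  rw [hA.apply, hB.apply, mul_comm]

lemma spectral_sum {M : Matrix n n ℂ} (hM : M.IsHermitian) :
    M = ∑ j, (hM.eigenvalues j : ℂ) •
      vecMulVec (fun i => (hM.eigenvectorUnitary : Matrix n n ℂ) i j)
        (star fun i => (hM.eigenvectorUnitary : Matrix n n ℂ) i j) := by
  conv_lhs => rw [hM.spectral_theorem, Unitary.conjStarAlgAut_apply]
  ext i k
  rw [Matrix.sum_apply, Matrix.mul_apply]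
  simp only [Matrix.mul_diagonal, Matrix.star_apply, Function.comp_apply,
    Matrix.smul_apply, vecMulVec_apply, Pi.star_apply, smul_eq_mul]
  refine Finset.sum_congr rfl fun j _ => ?_
  show _ * ((hM.eigenvalues j : ℝ) : ℂ) * _ = ((hM.eigenvalues j : ℝ) : ℂ) * (_ * _)
  ring

end QRRaux


open QRRaux

/-- **Rank reduction of the shared quantum state.** Given a density matrix `ρ`
on `ℂ^p ⊗ ℂ^q` and POVMs for Alice and Bob, there is a density matrix `ρ'` of
rank at most `d + 1` (`d = A·B·X·Y`) producing exactly the same behavior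
`P(ab|xy) = tr[ρ (Π^A_{a|x} ⊗ Π^B_{b|y})]`; the dimension of the Hilbert space
is unchanged. -/
theorem quantum_rank_reduction
    (p q A B X Y : ℕ)
    (ρ : Matrix (Fin p × Fin q) (Fin p × Fin q) ℂ)
    (hρ : ρ.PosSemidef) (hρtr : ρ.trace = 1)
    (PiA : Fin A → Fin X → Matrix (Fin p) (Fin p) ℂ)
    (PiB : Fin B → Fin Y → Matrix (Fin q) (Fin q) ℂ)
    (hPiA : ∀ a x, (PiA a x).PosSemidef)
    (hPiAsum : ∀ x, ∑ a, PiA a x = 1)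
    (hPiB : ∀ b y, (PiB b y).PosSemidef)
    (hPiBsum : ∀ y, ∑ b, PiB b y = 1) :
    ∃ ρ' : Matrix (Fin p × Fin q) (Fin p × Fin q) ℂ,
      ρ'.PosSemidef ∧ ρ'.trace = 1 ∧ ρ'.rank ≤ A * B * X * Y + 1 ∧
      ∀ (a : Fin A) (b : Fin B) (x : Fin X) (y : Fin Y),
        (ρ' * (PiA a x ⊗ₖ PiB b y)).trace = (ρ * (PiA a x ⊗ₖ PiB b y)).trace := by
  classical
  rcases isEmpty_or_nonempty (Fin p × Fin q) with hemp | hne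
  · exact absurd hρtr (by simp [Matrix.trace])
  set E : (Fin A × Fin B × Fin X × Fin Y) → Matrix (Fin p × Fin q) (Fin p × Fin q) ℂ :=
    fun i => PiA i.1 i.2.2.1 ⊗ₖ PiB i.2.1 i.2.2.2 with hE
  have hEherm : ∀ i, (E i).IsHermitian := fun i => kron_herm (hPiA _ _).1 (hPiB _ _).1
  have hH : ρ.IsHermitian := hρ.1
  set U : Matrix (Fin p × Fin q) (Fin p × Fin q) ℂ :=
    (hH.eigenvectorUnitary : Matrix (Fin p × Fin q) (Fin p × Fin q) ℂ) with hUdef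
  set P : (Fin p × Fin q) → Matrix (Fin p × Fin q) (Fin p × Fin q) ℂ :=
    fun j => vecMulVec (fun i => U i j) (star fun i => U i j) with hPdef
  have hdecomp : ρ = ∑ j, (hH.eigenvalues j : ℂ) • P j := spectral_sum hH
  have hPpsd : ∀ j, (P j).PosSemidef := fun j => psd_vecMulVec _
  have hPtr : ∀ j, (P j).trace = 1 := by
    intro j
    have hu : star U * U = 1 := Matrix.mem_unitaryGroup_iff'.mp (hH.eigenvectorUnitary).2
    have h2 : (star U * U) j j = 1 := by rw [hu]; simp
    rw [Matrix.mul_apply] at h2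
    rw [Matrix.trace]
    simp only [diag_apply, hPdef, vecMulVec_apply, Pi.star_apply]
    calc ∑ i, U i j * star (U i j)
        = ∑ i, (star U) j i * U i j :=
          Finset.sum_congr rfl fun i _ => by rw [Matrix.star_apply]; ring
      _ = 1 := h2
  have hlam0 : ∀ j, 0 ≤ hH.eigenvalues j := hρ.eigenvalues_nonneg
  have hlamsum : ∑ j, hH.eigenvalues j = 1 := by
    have h0 : ρ.trace = ∑ j, ((hH.eigenvalues j : ℝ) : ℂ) := by
      have h1 : ρ.trace = (∑ j, (hH.eigenvalues j : ℂ) • P j).trace := by rw [← hdecomp]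
      rw [h1, trace_sum]
      exact Finset.sum_congr rfl fun j _ => by rw [trace_smul, hPtr j, smul_eq_mul, mul_one]
    have h2 : ((∑ j, hH.eigenvalues j : ℝ) : ℂ) = 1 := by
      rw [Complex.ofReal_sum, ← h0, hρtr]
    exact_mod_cast h2
  set f : Matrix (Fin p × Fin q) (Fin p × Fin q) ℂ → ((Fin A × Fin B × Fin X × Fin Y) → ℝ) :=
    fun M i => ((M * E i).trace).re with hf
  have hfρ : f ρ = ∑ j, hH.eigenvalues j • f (P j) := by
    funext i
    have h0 : ρ * E i = (∑ j, (hH.eigenvalues j : ℂ) • P j) * E i := by rw [← hdecomp]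
    rw [Finset.sum_apply]
    simp only [hf, Pi.smul_apply, smul_eq_mul]
    rw [h0, Finset.sum_mul, trace_sum, Complex.re_sum]
    refine Finset.sum_congr rfl fun j _ => ?_
    rw [smul_mul_assoc, trace_smul, smul_eq_mul, Complex.re_ofReal_mul]
  have hmem : f ρ ∈ convexHull ℝ (Set.range fun j => f (P j)) := by
    have h := Finset.centerMass_mem_convexHull (Finset.univ)
      (fun j _ => hlam0 j) (by rw [hlamsum]; norm_num)
      (fun j _ => Set.mem_range_self (f := fun j => f (P j)) j)
    rw [Finset.centerMass_eq_of_sum_1 _ _ hlamsum] at h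
    rwa [← hfρ] at h
  rw [convexHull_eq_union] at hmem
  simp only [Set.mem_iUnion] at hmem
  obtain ⟨t, hts, hai, hmem⟩ := hmem
  rw [Finset.convexHull_eq, Set.mem_setOf_eq] at hmem
  obtain ⟨w, hw0, hw1, hcm⟩ := hmem
  rw [Finset.centerMass_eq_of_sum_1 _ _ hw1] at hcm
  have hgex : ∀ y ∈ t, ∃ j, f (P j) = y := by
    intro y hy
    obtain ⟨j, hj⟩ := hts hy
    exact ⟨j, hj⟩
  choose g hg using hgex
  have hcard : t.card ≤ A * B * X * Y + 1 := by
    have h1 := hai.card_le_finrank_succ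
    rw [Fintype.card_coe] at h1
    have h2 : Module.finrank ℝ (vectorSpan ℝ (Set.range ((↑) : t → (Fin A × Fin B × Fin X × Fin Y) → ℝ))) ≤ A * B * X * Y := by
      refine le_trans (Submodule.finrank_le _) ?_
      rw [Module.finrank_pi]
      simp [Fintype.card_prod, mul_assoc]
    omega
  set ρ' : Matrix (Fin p × Fin q) (Fin p × Fin q) ℂ :=
    ∑ y ∈ t.attach, ((w y.1 : ℝ) : ℂ) • P (g y.1 y.2) with hρ'def
  have hρ'psd : ρ'.PosSemidef :=
    psd_sum _ _ fun y _ => psd_smul (hw0 y.1 y.2) (hPpsd _)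
  refine ⟨ρ', hρ'psd, ?_, ?_, ?_⟩
  · rw [hρ'def, trace_sum]
    have h1 : ∀ y ∈ t.attach, (((w y.1 : ℝ) : ℂ) • P (g y.1 y.2)).trace = ((w y.1 : ℝ) : ℂ) :=
      fun y _ => by rw [trace_smul, hPtr, smul_eq_mul, mul_one]
    rw [Finset.sum_congr rfl h1]
    rw [← Complex.ofReal_sum]
    rw [show (∑ y ∈ t.attach, w y.1) = ∑ y ∈ t, w y from Finset.sum_attach t (fun y => w y)]
    rw [hw1, Complex.ofReal_one]
  · rw [hρ'def]
    refine le_trans (rank_sum_le _ _) ?_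
    calc ∑ y ∈ t.attach, (((w y.1 : ℝ) : ℂ) • P (g y.1 y.2)).rank
        ≤ ∑ _y ∈ t.attach, 1 :=
          Finset.sum_le_sum fun y _ =>
            le_trans (rank_smul_le _ _) (QRRaux.rank_vecMulVec_le _ _)
      _ = t.card := by simp
      _ ≤ _ := hcard
  · intro a b x y
    have hEi : PiA a x ⊗ₖ PiB b y = E (a, b, x, y) := rfl
    rw [hEi]
    set i0 : Fin A × Fin B × Fin X × Fin Y := (a, b, x, y) with hi0
    have hre : ((ρ' * E i0).trace).re = ((ρ * E i0).trace).re := by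
      have h1 : ((ρ' * E i0).trace).re = ∑ v ∈ t.attach, w v.1 * v.1 i0 := by
        rw [hρ'def, Finset.sum_mul, trace_sum, Complex.re_sum]
        refine Finset.sum_congr rfl fun v _ => ?_
        rw [smul_mul_assoc, trace_smul, smul_eq_mul, Complex.re_ofReal_mul]
        congr 1
        exact congrFun (hg v.1 v.2) i0
      have h2 : ∑ v ∈ t.attach, w v.1 * v.1 i0 = f ρ i0 := by
        rw [show (∑ v ∈ t.attach, w v.1 * v.1 i0) = ∑ v ∈ t, w v * v i0 from
          Finset.sum_attach t (fun v => w v * v i0)]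
        have h := congrFun hcm i0
        rw [Finset.sum_apply] at h
        simpa [Pi.smul_apply, smul_eq_mul] using h
      rw [h1, h2]
    calc (ρ' * E i0).trace
        = (((ρ' * E i0).trace.re : ℝ) : ℂ) := (trace_real hρ'psd.1 (hEherm i0)).symm
      _ = (((ρ * E i0).trace.re : ℝ) : ℂ) := by rw [hre]
      _ = (ρ * E i0).trace := trace_real hH (hEherm i0)
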